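/- Let C = {0,1}^ℕ be the Cantor cube, let X ⊆ C be a σ-compact subset, let F be a nonempty compact subset of X, and let n ≥ 1 be a natural number. Then the set 𝒜_n(X,F) = {A ∈ 𝒦(C) : A ⊆ X, 1 ≤ |A'| ≤ n, and A' ⊆ F} is an F_σδ subset of 𝒦(C), and the set 𝒜_ω(X,F) = {A ∈ 𝒦(C) : A ⊆ X, A' is nonempty and finite, and A' ⊆ F} is an F_σδσ subset of 𝒦(C). -/

import Mathlib

open TopologicalSpace Filter Set

/-- `𝒜_n(X) = {A ∈ 𝒦(X) : 1 ≤ |A'| ≤ n}` where `A'` is the derived set of `A` in `X`. -/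
def An (X : Type*) [MetricSpace X] (n : ℕ) : Set (NonemptyCompacts X) :=
  {A | 1 ≤ (derivedSet (A : Set X)).ncard ∧ (derivedSet (A : Set X)).ncard ≤ n}

/-- `𝒜_n(X,F) = {A ∈ 𝒜_n(X) : A' ⊆ F}`. -/
def AnF (X : Type*) [MetricSpace X] (n : ℕ) (F : Set X) : Set (NonemptyCompacts X) :=
  {A | A ∈ An X n ∧ derivedSet (A : Set X) ⊆ F}

/-- `𝒜_ω(X) = {A ∈ 𝒦(X) : A' is nonempty and finite}`. -/
def Aom (X : Type*) [MetricSpace X] : Set (NonemptyCompacts X) :=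
  {A | (derivedSet (A : Set X)).Nonempty ∧ (derivedSet (A : Set X)).Finite}

/-- `𝒜_ω(X,F) = {A ∈ 𝒜_ω(X) : A' ⊆ F}`. -/
def AomF (X : Type*) [MetricSpace X] (F : Set X) : Set (NonemptyCompacts X) :=
  {A | A ∈ Aom X ∧ derivedSet (A : Set X) ⊆ F}

/-- `𝒜_{ω+1}(X) = {A ∈ 𝒦(X) : A' is nonempty and countable}`. -/
def Aom1 (X : Type*) [MetricSpace X] : Set (NonemptyCompacts X) :=
  {A | (derivedSet (A : Set X)).Nonempty ∧ (derivedSet (A : Set X)).Countable}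

/-- `ℋ(X) = {A ∈ 𝒦(X) : A countable}`. -/
def HH (X : Type*) [MetricSpace X] : Set (NonemptyCompacts X) :=
  {A | (A : Set X).Countable}

/-- F_σ set: a countable union of closed sets. -/
def IsFsigma {Y : Type*} [TopologicalSpace Y] (S : Set Y) : Prop :=
  ∃ f : ℕ → Set Y, (∀ i, IsClosed (f i)) ∧ S = ⋃ i, f i

/-- F_σδ set: a countable intersection of F_σ sets. -/
def IsFsigmaDelta {Y : Type*} [TopologicalSpace Y] (S : Set Y) : Prop :=
  ∃ f : ℕ → Set Y, (∀ i, IsFsigma (f i)) ∧ S = ⋂ i, f i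

/-- F_σδσ set: a countable union of F_σδ sets. -/
def IsFsigmaDeltaSigma {Y : Type*} [TopologicalSpace Y] (S : Set Y) : Prop :=
  ∃ f : ℕ → Set Y, (∀ i, IsFsigmaDelta (f i)) ∧ S = ⋃ i, f i

/-- G_δσ set: a countable union of G_δ sets. -/
def IsGdeltaSigma {Y : Type*} [TopologicalSpace Y] (S : Set Y) : Prop :=
  ∃ f : ℕ → Set Y, (∀ i, IsGδ (f i)) ∧ S = ⋃ i, f i

/-- G_δσδ set: a countable intersection of G_δσ sets. -/
def IsGdeltaSigmaDelta {Y : Type*} [TopologicalSpace Y] (S : Set Y) : Prop :=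
  ∃ f : ℕ → Set Y, (∀ i, IsGdeltaSigma (f i)) ∧ S = ⋂ i, f i

/-- A space is of the first category in itself if it is the union of countably many
subsets that are nowhere dense in it. -/
def FirstCategoryInItself (T : Type*) [TopologicalSpace T] : Prop :=
  ∃ f : ℕ → Set T, (∀ i, IsNowhereDense (f i)) ∧ (⋃ i, f i) = Set.univ

/-- A space is strongly homogeneous if any two nonempty clopen subsets are homeomorphic. -/
def StronglyHomogeneous (T : Type*) [TopologicalSpace T] : Prop :=
  ∀ U V : Set T, IsClopen U → IsClopen V → U.Nonempty → V.Nonempty → Nonempty (↥U ≃ₜ ↥V)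

/-- The standard set `P₃` in the Cantor cube `{0,1}^ℕ`. -/
def P3 : Set (ℕ → Bool) :=
  {x | ∀ n : ℕ, ∀ᶠ k in Filter.atTop, x (2 ^ n * (2 * k + 1)) = false}

/-- The standard set `S₄` in the Cantor cube `{0,1}^ℕ`. -/
def S4 : Set (ℕ → Bool) :=
  {x | ∀ᶠ n in Filter.atTop, ∀ᶠ k in Filter.atTop, x (2 ^ n * (2 * k + 1)) = false}

/-- The standard set `Π₃` in the Hilbert cube `[0,1]^ℕ`. -/
def Pi3 : Set (ℕ → ↥unitInterval) :=
  {x | ∀ n : ℕ, ∀ᶠ m in Filter.atTop, x (2 ^ n * (2 * m + 1)) = 0}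

/-- The standard set `Σ₄` in the Hilbert cube `[0,1]^ℕ`. -/
def Sigma4 : Set (ℕ → ↥unitInterval) :=
  {x | ∃ n₀ : ℕ, ∀ n ≥ n₀, ∀ᶠ m in Filter.atTop, x (2 ^ n * (2 * m + 1)) = 0}

/-- `c₀`: the space of real sequences converging to `0`, as a subspace of `ℝ^ℕ`
with the product topology. -/
def c0 : Set (ℕ → ℝ) := {x | Filter.Tendsto x Filter.atTop (nhds 0)}

/-- A metric on the Cantor cube `{0,1}^ℕ` compatible with its product topology. -/
noncomputable instance : MetricSpace (ℕ → Bool) :=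
  TopologicalSpace.metrizableSpaceMetric _

open Metric

namespace St18

section Fsigma

variable {Z : Type*} [TopologicalSpace Z]

lemma isFsigma_of_closed {S : Set Z} (h : IsClosed S) : IsFsigma S :=
  ⟨fun _ => S, fun _ => h, (Set.iUnion_const S).symm⟩

lemma isFsigma_iUnion_closed {ι : Type*} [Countable ι] (g : ι → Set Z)
    (h : ∀ i, IsClosed (g i)) : IsFsigma (⋃ i, g i) := by
  cases isEmpty_or_nonempty ι with
  | inl hι => simpa [iUnion_of_empty] using isFsigma_of_closed (isClosed_empty (X := Z))
  | inr hι =>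
    obtain ⟨e, he⟩ := exists_surjective_nat ι
    exact ⟨fun n => g (e n), fun n => h _, (he.iUnion_comp (fun i => g i)).symm⟩

lemma isFsigma_iUnion {ι : Type*} [Countable ι] (g : ι → Set Z)
    (h : ∀ i, IsFsigma (g i)) : IsFsigma (⋃ i, g i) := by
  choose f hf hfeq using h
  have : (⋃ i, g i) = ⋃ p : ι × ℕ, f p.1 p.2 := by
    ext x
    simp only [mem_iUnion, Prod.exists]
    constructor
    · rintro ⟨i, hi⟩
      rw [hfeq i] at hi
      obtain ⟨n, hn⟩ := mem_iUnion.1 hi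
      exact ⟨i, n, hn⟩
    · rintro ⟨i, n, hn⟩
      exact ⟨i, by rw [hfeq i]; exact mem_iUnion.2 ⟨n, hn⟩⟩
  rw [this]
  exact isFsigma_iUnion_closed _ fun p => hf p.1 p.2

lemma isFsigmaDelta_iInter_fsigma {ι : Type*} [Countable ι] [Nonempty ι] (g : ι → Set Z)
    (h : ∀ i, IsFsigma (g i)) : IsFsigmaDelta (⋂ i, g i) := by
  obtain ⟨e, he⟩ := exists_surjective_nat ι
  exact ⟨fun n => g (e n), fun n => h _, (he.iInter_comp (fun i => g i)).symm⟩

lemma isFsigma_of_isOpen {M : Type*} [MetricSpace M] {U : Set M} (h : IsOpen U) :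
    IsFsigma U := by
  rcases eq_empty_or_nonempty Uᶜ with hc | hc
  · rw [compl_empty_iff] at hc
    exact hc ▸ isFsigma_of_closed isClosed_univ
  · have hUeq : U = ⋃ k : ℕ, {x | ((k : ℝ) + 1)⁻¹ ≤ Metric.infDist x Uᶜ} := by
      ext x
      simp only [mem_iUnion, mem_setOf_eq]
      constructor
      · intro hx
        have hpos : 0 < Metric.infDist x Uᶜ :=
          (IsClosed.notMem_iff_infDist_pos h.isClosed_compl hc).1 (by simpa using hx)
        obtain ⟨k, hk⟩ := exists_nat_gt (Metric.infDist x Uᶜ)⁻¹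
        refine ⟨k, ?_⟩
        rw [inv_le_comm₀ (by positivity) hpos]
        exact le_of_lt (lt_trans hk (by linarith))
      · rintro ⟨k, hk⟩
        by_contra hx
        have h0 : Metric.infDist x Uᶜ = 0 := Metric.infDist_zero_of_mem (by simpa using hx)
        rw [h0] at hk
        have : (0:ℝ) < ((k:ℝ)+1)⁻¹ := by positivity
        linarith
    rw [hUeq]
    refine isFsigma_iUnion_closed _ fun k => ?_
    exact isClosed_le continuous_const (Metric.continuous_infDist_pt _)

end Fsigma

section Hyper

variable {M : Type*} [MetricSpace M]

/-- `A` has at least `k` points in `U` (witnessed by a finset of card `k`). -/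
def NK (U : Set M) (k : ℕ) : Set (NonemptyCompacts M) :=
  {A | ∃ t : Finset M, ↑t ⊆ (A : Set M) ∩ U ∧ t.card = k}

lemma isOpen_NK {U : Set M} (hU : IsOpen U) (k : ℕ) : IsOpen (NK U k) := by
  classical
  refine Metric.isOpen_iff.2 ?_
  rintro A ⟨t, hts, htc⟩
  by_cases hte : t.Nonempty
  · have hUball : ∃ ε > (0:ℝ), ∀ x ∈ t, ball x ε ⊆ U := by
      rcases eq_empty_or_nonempty Uᶜ with hUc | hUc
      · refine ⟨1, one_pos, fun x _ y _ => ?_⟩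
        have : U = univ := compl_empty_iff.1 hUc
        simp [this]
      · obtain ⟨x₀, hx₀t, hmin⟩ := t.exists_min_image (fun x => infDist x Uᶜ) hte
        refine ⟨infDist x₀ Uᶜ, ?_, ?_⟩
        · exact (IsClosed.notMem_iff_infDist_pos hU.isClosed_compl hUc).1
            (by simpa using (hts hx₀t).2)
        · intro x hx y hy
          by_contra hyU
          have h1 : infDist x Uᶜ ≤ dist x y := infDist_le_dist_of_mem (by simpa using hyU)
          have h2 := hmin x hx
          rw [mem_ball, dist_comm] at hy
          linarith
    obtain ⟨ε₁, hε₁, hball⟩ := hUball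
    have hsep : ∃ δ > (0:ℝ), ∀ x ∈ t, ∀ x' ∈ t, x ≠ x' → 3 * δ ≤ dist x x' := by
      set P := (t ×ˢ t).filter (fun p => p.1 ≠ p.2) with hP
      by_cases hPe : P.Nonempty
      · obtain ⟨p₀, hp₀, hmin⟩ := P.exists_min_image (fun p => dist p.1 p.2) hPe
        have hne : p₀.1 ≠ p₀.2 := (Finset.mem_filter.1 hp₀).2
        have hdpos : 0 < dist p₀.1 p₀.2 := dist_pos.2 hne
        refine ⟨dist p₀.1 p₀.2 / 3, by linarith, fun x hx x' hx' hne' => ?_⟩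
        have hmem : (x, x') ∈ P := Finset.mem_filter.2 ⟨Finset.mem_product.2 ⟨hx, hx'⟩, hne'⟩
        have := hmin _ hmem
        simp only at this
        linarith
      · refine ⟨1, one_pos, fun x hx x' hx' hne' => absurd ?_ hPe⟩
        exact ⟨(x, x'), Finset.mem_filter.2 ⟨Finset.mem_product.2 ⟨hx, hx'⟩, hne'⟩⟩
    obtain ⟨δ, hδ, hd3⟩ := hsep
    refine ⟨min ε₁ δ, lt_min hε₁ hδ, ?_⟩
    intro B hB
    rw [mem_ball] at hB
    have hfin : EMetric.hausdorffEdist (A : Set M) B ≠ ⊤ :=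
      hausdorffEdist_ne_top_of_nonempty_of_bounded A.nonempty B.nonempty
        A.isCompact.isBounded B.isCompact.isBounded
    have hHd : hausdorffDist (A : Set M) B < min ε₁ δ := by
      rw [dist_comm] at hB
      rw [← NonemptyCompacts.dist_eq]
      exact hB
    have hget : ∀ x ∈ t, ∃ y ∈ (B : Set M), dist x y < min ε₁ δ := fun x hx =>
      exists_dist_lt_of_hausdorffDist_lt (hts hx).1 hHd hfin
    choose f hfB hfd using hget
    refine ⟨t.attach.image (fun x => f x.1 x.2), ?_, ?_⟩
    · intro y hy
      simp only [Finset.coe_image, mem_image, Finset.mem_coe, Finset.mem_attach,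
        true_and] at hy
      obtain ⟨⟨x, hx⟩, hxy⟩ := hy
      subst hxy
      refine ⟨hfB x hx, ?_⟩
      exact hball x hx (mem_ball'.2 (lt_of_lt_of_le (hfd x hx) (min_le_left _ _)))
    · rw [Finset.card_image_of_injective _ ?_, Finset.card_attach, htc]
      rintro ⟨x, hx⟩ ⟨x', hx'⟩ hxy
      simp only at hxy
      by_contra hne
      have hne' : x ≠ x' := fun h => hne (by simpa using h)
      have h3 := hd3 x hx x' hx' hne'
      have d1 : dist x (f x hx) < δ := lt_of_lt_of_le (hfd x hx) (min_le_right _ _)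
      have d2 : dist x' (f x' hx') < δ := lt_of_lt_of_le (hfd x' hx') (min_le_right _ _)
      have hmid : dist (f x hx) (f x' hx') = 0 := by rw [hxy]; simp
      have htr : dist x x' ≤ dist x (f x hx) + dist (f x hx) (f x' hx') + dist (f x' hx') x' :=
        dist_triangle4 _ _ _ _
      rw [hmid, dist_comm (f x' hx') x'] at htr
      linarith
  · rw [Finset.not_nonempty_iff_eq_empty] at hte
    refine ⟨1, one_pos, fun B _ => ⟨∅, by simp, by rw [← htc, hte]⟩⟩

lemma isClosed_subC {U C : Set M} (hU : IsOpen U) (hC : IsClosed C) :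
    IsClosed {A : NonemptyCompacts M | (A : Set M) ∩ U ⊆ C} := by
  rw [← isOpen_compl_iff]
  have heq : {A : NonemptyCompacts M | (A : Set M) ∩ U ⊆ C}ᶜ = NK (U ∩ Cᶜ) 1 := by
    ext A
    simp only [mem_compl_iff, mem_setOf_eq, not_subset, NK]
    constructor
    · rintro ⟨x, ⟨hxA, hxU⟩, hxC⟩
      refine ⟨{x}, ?_, Finset.card_singleton x⟩
      intro y hy
      simp only [Finset.coe_singleton, mem_singleton_iff] at hy
      subst hy
      exact ⟨hxA, hxU, hxC⟩
    · rintro ⟨t, hts, htc⟩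
      obtain ⟨x, hx⟩ := Finset.card_eq_one.1 htc
      subst hx
      have hx := hts (Finset.mem_coe.2 (Finset.mem_singleton_self x))
      exact ⟨x, ⟨hx.1, hx.2.1⟩, hx.2.2⟩
  rw [heq]
  exact isOpen_NK (hU.inter hC.isOpen_compl) 1

lemma NK_of_infinite {U : Set M} {A : NonemptyCompacts M}
    (h : ((A : Set M) ∩ U).Infinite) (k : ℕ) : A ∈ NK U k := by
  obtain ⟨t, hts, htc⟩ := h.exists_subset_card_eq k
  exact ⟨t, hts, htc⟩

lemma notNK_of_finite {U : Set M} {A : NonemptyCompacts M}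
    (h : ((A : Set M) ∩ U).Finite) : ∃ k, A ∉ NK U k := by
  classical
  refine ⟨h.toFinset.card + 1, ?_⟩
  rintro ⟨t, hts, htc⟩
  have hsub : t ⊆ h.toFinset := fun x hx => h.mem_toFinset.2 (hts hx)
  have := Finset.card_le_card hsub
  omega

lemma infinite_inter_of_derivedSet {A U : Set M} {x : M}
    (hx : x ∈ derivedSet A) (hU : U ∈ nhds x) : (A ∩ U).Infinite := by
  intro hfin
  have hcl : IsClosed ((A ∩ U) \ {x}) := (hfin.diff : ((A ∩ U) \ {x}).Finite).isClosed
  have hV : ((A ∩ U) \ {x})ᶜ ∈ nhds x := hcl.isOpen_compl.mem_nhds (by simp)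
  obtain ⟨y, hy, hyne⟩ := accPt_iff_nhds.1 (hx : AccPt x (𝓟 A)) (((A ∩ U) \ {x})ᶜ ∩ U)
    (inter_mem hV hU)
  exact hy.1.1 ⟨⟨hy.2, hy.1.2⟩, hyne⟩

lemma exists_derivedSet_inter {A U : Set M} (h : (A ∩ U).Infinite)
    (hAc : IsCompact A) (hUc : IsClosed U) : ∃ x, x ∈ derivedSet A ∧ x ∈ U := by
  obtain ⟨x, _, hacc⟩ := h.exists_accPt_of_subset_isCompact hAc inter_subset_left
  refine ⟨x, hacc.mono (principal_mono.2 inter_subset_left), ?_⟩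
  have h1 : x ∈ closure (A ∩ U) := derivedSet_subset_closure _ hacc
  have h2 : closure (A ∩ U) ⊆ U := closure_minimal inter_subset_right hUc
  exact h2 h1

end Hyper

section Cantor

/-- Index type for cylinders in the Cantor cube. -/
abbrev CylIdx := Σ m : ℕ, Fin m → Bool

/-- Cylinder sets in the Cantor cube. -/
def cyl (c : CylIdx) : Set (ℕ → Bool) := {x | ∀ i : Fin c.1, x (i : ℕ) = c.2 i}

lemma isClopen_cyl (c : CylIdx) : IsClopen (cyl c) := by
  have : cyl c = ⋂ i : Fin c.1, (fun x : ℕ → Bool => x (i : ℕ)) ⁻¹' {c.2 i} := by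
    ext x; simp [cyl]
  rw [this]
  exact isClopen_iInter_of_finite fun i =>
    (isClopen_discrete {c.2 i}).preimage (continuous_apply (i : ℕ))

lemma mem_cyl_basis {U : Set (ℕ → Bool)} (hU : IsOpen U) {x : ℕ → Bool} (hx : x ∈ U) :
    ∃ c : CylIdx, x ∈ cyl c ∧ cyl c ⊆ U := by
  obtain ⟨I, u, hu, hsub⟩ := isOpen_pi_iff.1 hU x hx
  refine ⟨⟨I.sup id + 1, fun i => x (i : ℕ)⟩, fun i => rfl, ?_⟩
  intro z hz
  refine hsub ?_
  intro i hi
  have hlt : i < I.sup id + 1 := Nat.lt_succ_of_le (Finset.le_sup (f := id) hi)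
  have := hz ⟨i, hlt⟩
  simp only at this
  rw [this]
  exact (hu i hi).2

lemma exists_disjoint_cyl {q : ℕ} (g : Fin q → (ℕ → Bool)) (hg : Function.Injective g) :
    ∃ c : Fin q → CylIdx, (∀ j, g j ∈ cyl (c j)) ∧
      ∀ j j', j ≠ j' → ∀ z, z ∈ cyl (c j) → z ∈ cyl (c j') → False := by
  classical
  have hW : ∀ p : Fin q × Fin q, p.1 ≠ p.2 → ∃ i, g p.1 i ≠ g p.2 i := by
    intro p hp
    by_contra h
    push_neg at h
    exact hp (hg (funext h))
  set W : Fin q × Fin q → ℕ :=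
    fun p => if h : p.1 ≠ p.2 then (hW p h).choose else 0 with hWdef
  set m : ℕ := (Finset.univ.sup W) + 1 with hm
  refine ⟨fun j => ⟨m, fun i => g j (i : ℕ)⟩, fun j i => rfl, ?_⟩
  intro j j' hne z hz hz'
  have hWlt : W (j, j') < m := Nat.lt_succ_of_le (Finset.le_sup (Finset.mem_univ _))
  have hWspec : g j (W (j, j')) ≠ g j' (W (j, j')) := by
    have heq : W (j, j') = (hW (j, j') hne).choose := by
      rw [hWdef]; simp [hne]
    rw [heq]
    exact (hW (j, j') hne).choose_spec
  have h1 := hz ⟨W (j, j'), hWlt⟩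
  have h2 := hz' ⟨W (j, j'), hWlt⟩
  simp only at h1 h2
  exact hWspec (h1.symm.trans h2)

end Cantor



local notation "Y" => (ℕ → Bool)
local notation "𝒦" => NonemptyCompacts (ℕ → Bool)

lemma part1 (X : Set Y) (hX : IsSigmaCompact X)
    (F : Set Y) (hFc : IsCompact F) (hFX : F ⊆ X) (n : ℕ) :
    IsFsigmaDelta {A : 𝒦 | (A : Set Y) ⊆ X ∧ A ∈ AnF (ℕ → Bool) n F} := by
  classical
  obtain ⟨KK, hKK, hKKX⟩ := hX
  set Km : ℕ → Set Y := fun m => ⋃ i ∈ Iic m, KK i with hKmdef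
  have hKmc : ∀ m, IsClosed (Km m) := fun m =>
    ((Set.finite_Iic m).isCompact_biUnion (fun i _ => hKK i)).isClosed
  have hKmX : ∀ m, Km m ⊆ X := fun m => by
    rw [← hKKX]
    exact iUnion₂_subset fun i _ => subset_iUnion KK i
  set G1 : ℕ → Set 𝒦 := fun k => NK univ k with hG1def
  set G2 : (Fin (n+1) → CylIdx) → Set 𝒦 := fun t =>
    if (∀ j j', j ≠ j' → ∀ z, z ∈ cyl (t j) → z ∈ cyl (t j') → False) then
      ⋃ j : Fin (n+1), ⋃ k : ℕ, (NK (cyl (t j)) k)ᶜ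
    else univ with hG2def
  set G3 : CylIdx → Set 𝒦 := fun c =>
    if cyl c ∩ F = ∅ then
      ⋃ p : ℕ × ℕ, ((NK (cyl c) p.1)ᶜ ∩ {A : 𝒦 | (A : Set Y) ∩ cyl c ⊆ Km p.2})
    else univ with hG3def
  have hG1 : ∀ k, IsFsigma (G1 k) := fun k => isFsigma_of_isOpen (isOpen_NK isOpen_univ k)
  have hG2 : ∀ t, IsFsigma (G2 t) := by
    intro t
    simp only [hG2def]
    split_ifs with h
    · exact isFsigma_iUnion _ fun j => isFsigma_iUnion_closed _ fun k =>
        (isOpen_NK (isClopen_cyl _).isOpen k).isClosed_compl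
    · exact isFsigma_of_closed isClosed_univ
  have hG3 : ∀ c, IsFsigma (G3 c) := by
    intro c
    simp only [hG3def]
    split_ifs with h
    · exact isFsigma_iUnion_closed _ fun p =>
        ((isOpen_NK (isClopen_cyl c).isOpen p.1).isClosed_compl.inter
          (isClosed_subC (isClopen_cyl c).isOpen (hKmc p.2)))
    · exact isFsigma_of_closed isClosed_univ
  have hEq : {A : 𝒦 | (A : Set Y) ⊆ X ∧ A ∈ AnF (ℕ → Bool) n F} =
      (⋂ k, G1 k) ∩ ((⋂ t, G2 t) ∩ (⋂ c, G3 c)) := by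
    ext A
    simp only [mem_setOf_eq, AnF, An, mem_inter_iff, mem_iInter]
    constructor
    · rintro ⟨hAX, ⟨h1, h2⟩, hAF⟩
      have hDfin : (derivedSet (A : Set Y)).Finite :=
        Set.finite_of_ncard_ne_zero (by omega)
      have hDne : (derivedSet (A : Set Y)).Nonempty :=
        Set.nonempty_of_ncard_ne_zero (by omega)
      have hAinf : ((A : Set Y) ∩ univ).Infinite := by
        obtain ⟨x, hx⟩ := hDne
        exact infinite_inter_of_derivedSet hx univ_mem
      refine ⟨fun k => NK_of_infinite hAinf k, fun t => ?_, fun c => ?_⟩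
      · simp only [hG2def]
        split_ifs with hdisj
        · by_contra hcon
          simp only [mem_iUnion, mem_compl_iff, not_exists, not_not] at hcon
          have htr : ∀ j : Fin (n+1), ((A : Set Y) ∩ cyl (t j)).Infinite := by
            intro j hfin
            obtain ⟨k, hk⟩ := notNK_of_finite hfin
            exact hk (hcon j k)
          have hx : ∀ j : Fin (n+1), ∃ x, x ∈ derivedSet (A : Set Y) ∧ x ∈ cyl (t j) :=
            fun j => exists_derivedSet_inter (htr j) A.isCompact (isClopen_cyl _).isClosed
          choose x hxD hxc using hx
          have hinj : Function.Injective x := by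
            intro j j' hjj
            by_contra hne
            exact hdisj j j' hne (x j) (hxc j) (hjj ▸ hxc j')
          have hle : (n+1 : ℕ) ≤ (derivedSet (A : Set Y)).ncard := by
            have hsub : ↑(Finset.univ.image x) ⊆ derivedSet (A : Set Y) := by
              intro y hy
              simp only [Finset.coe_image, Finset.coe_univ, image_univ, mem_range] at hy
              obtain ⟨j, rfl⟩ := hy
              exact hxD j
            have hcard : (Finset.univ.image x).card = n+1 := by
              rw [Finset.card_image_of_injective _ hinj, Finset.card_univ, Fintype.card_fin]
            calc (n+1 : ℕ) = (↑(Finset.univ.image x) : Set Y).ncard := by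
                  rw [Set.ncard_coe_finset, hcard]
              _ ≤ _ := Set.ncard_le_ncard hsub hDfin
          omega
        · trivial
      · simp only [hG3def]
        split_ifs with hcF
        · have hfin : ((A : Set Y) ∩ cyl c).Finite := by
            by_contra hinf
            obtain ⟨x, hxD, hxc⟩ := exists_derivedSet_inter (hinf : _)
              A.isCompact (isClopen_cyl c).isClosed
            have hmem : x ∈ cyl c ∩ F := ⟨hxc, hAF hxD⟩
            rw [hcF] at hmem
            exact hmem
          obtain ⟨k, hk⟩ := notNK_of_finite hfin
          have hsel : ∀ x ∈ hfin.toFinset, ∃ i, x ∈ KK i := by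
            intro x hx
            have hxX : x ∈ X := hAX (hfin.mem_toFinset.1 hx).1
            rw [← hKKX] at hxX
            exact mem_iUnion.1 hxX
          choose idx hidx using hsel
          set m := hfin.toFinset.attach.sup (fun x => idx x.1 x.2) with hmdef
          refine mem_iUnion.2 ⟨(k, m), hk, ?_⟩
          intro y hy
          have hyt : y ∈ hfin.toFinset := hfin.mem_toFinset.2 hy
          refine mem_biUnion (mem_Iic.2 ?_) (hidx y hyt)
          exact Finset.le_sup (f := fun x : {a // a ∈ hfin.toFinset} => idx x.1 x.2)
            (Finset.mem_attach _ ⟨y, hyt⟩)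
        · trivial
    · rintro ⟨hA1, hA2, hA3⟩
      have hAinf : ((A : Set Y) ∩ univ).Infinite := by
        by_contra hfin
        rw [Set.not_infinite] at hfin
        obtain ⟨k, hk⟩ := notNK_of_finite hfin
        exact hk (hA1 k)
      have hceF : ∀ {x : Y}, x ∉ F → ∃ c, x ∈ cyl c ∧ cyl c ∩ F = ∅ := by
        intro x hxF
        obtain ⟨c, hxc, hcsub⟩ := mem_cyl_basis hFc.isClosed.isOpen_compl hxF
        refine ⟨c, hxc, ?_⟩
        ext z
        simp only [mem_inter_iff, mem_empty_iff_false, iff_false, not_and]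
        exact fun hz hzF => (hcsub hz) hzF
      have hDF : derivedSet (A : Set Y) ⊆ F := by
        intro x hx
        by_contra hxF
        obtain ⟨c, hxc, hce⟩ := hceF hxF
        have h3 := hA3 c
        rw [hG3def] at h3
        simp only at h3
        rw [if_pos hce] at h3
        obtain ⟨p, hp1, hp2⟩ := mem_iUnion.1 h3
        have hinf : ((A : Set Y) ∩ cyl c).Infinite :=
          infinite_inter_of_derivedSet hx ((isClopen_cyl c).isOpen.mem_nhds hxc)
        exact hp1 (NK_of_infinite hinf p.1)
      have hAX : (A : Set Y) ⊆ X := by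
        intro y hy
        by_cases hyF : y ∈ F
        · exact hFX hyF
        · obtain ⟨c, hyc, hce⟩ := hceF hyF
          have h3 := hA3 c
          rw [hG3def] at h3
          simp only at h3
          rw [if_pos hce] at h3
          obtain ⟨p, hp1, hp2⟩ := mem_iUnion.1 h3
          exact hKmX p.2 (hp2 ⟨hy, hyc⟩)
      have hcount : (derivedSet (A : Set Y)).Finite ∧ (derivedSet (A : Set Y)).ncard ≤ n := by
        by_contra hcon
        have hpts : ∃ u : Finset Y, ↑u ⊆ derivedSet (A : Set Y) ∧ u.card = n+1 := by
          by_cases hfin : (derivedSet (A : Set Y)).Finite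
          · have hgt : n+1 ≤ hfin.toFinset.card := by
              rw [← Set.ncard_eq_toFinset_card _ hfin]
              by_contra hle
              exact hcon ⟨hfin, by omega⟩
            obtain ⟨u, hu, hucard⟩ := Finset.exists_subset_card_eq hgt
            refine ⟨u, ?_, hucard⟩
            intro y hy
            exact hfin.mem_toFinset.1 (hu hy)
          · exact Set.Infinite.exists_subset_card_eq hfin (n+1)
        obtain ⟨u, husub, hucard⟩ := hpts
        have e : ↥u ≃ Fin (n+1) :=
          Fintype.equivFinOfCardEq (by rw [Fintype.card_coe, hucard])
        set g : Fin (n+1) → Y := fun j => ((e.symm j : ↥u) : Y) with hgdef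
        have hginj : Function.Injective g := fun j j' h =>
          e.symm.injective (Subtype.ext h)
        obtain ⟨c, hgc, hdisj⟩ := exists_disjoint_cyl g hginj
        have h2 := hA2 c
        rw [hG2def] at h2
        simp only at h2
        rw [if_pos hdisj] at h2
        obtain ⟨j, hj⟩ := mem_iUnion.1 h2
        obtain ⟨k, hk⟩ := mem_iUnion.1 hj
        have hgD : g j ∈ derivedSet (A : Set Y) := husub (e.symm j).2
        have hinf : ((A : Set Y) ∩ cyl (c j)).Infinite :=
          infinite_inter_of_derivedSet hgD ((isClopen_cyl _).isOpen.mem_nhds (hgc j))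
        exact hk (NK_of_infinite hinf k)
      have hDne : (derivedSet (A : Set Y)).Nonempty := by
        obtain ⟨x, hx, -⟩ := exists_derivedSet_inter hAinf A.isCompact isClosed_univ
        exact ⟨x, hx⟩
      exact ⟨hAX, ⟨(Set.ncard_pos hcount.1).2 hDne, hcount.2⟩, hDF⟩
  have hEq2 : (⋂ k, G1 k) ∩ ((⋂ t, G2 t) ∩ (⋂ c, G3 c)) =
      ⋂ j : ℕ ⊕ ((Fin (n+1) → CylIdx) ⊕ CylIdx), Sum.elim G1 (Sum.elim G2 G3) j := by
    ext A
    simp only [mem_inter_iff, mem_iInter, Sum.forall, Sum.elim_inl, Sum.elim_inr]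
  rw [hEq, hEq2]
  exact isFsigmaDelta_iInter_fsigma _ (by rintro (k | t | c)
                                          exacts [hG1 k, hG2 t, hG3 c])



lemma part2 (X : Set (ℕ → Bool)) (hX : IsSigmaCompact X)
    (F : Set (ℕ → Bool)) (hFc : IsCompact F) (hFX : F ⊆ X) :
    IsFsigmaDeltaSigma
      {A : NonemptyCompacts (ℕ → Bool) | (A : Set (ℕ → Bool)) ⊆ X ∧ A ∈ AomF (ℕ → Bool) F} := by
  refine ⟨fun m => {A : NonemptyCompacts (ℕ → Bool) |
      (A : Set (ℕ → Bool)) ⊆ X ∧ A ∈ AnF (ℕ → Bool) (m+1) F},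
    fun m => part1 X hX F hFc hFX (m+1), ?_⟩
  ext A
  simp only [mem_setOf_eq, mem_iUnion, AomF, AnF, An, Aom]
  constructor
  · rintro ⟨hAX, ⟨hne, hfin⟩, hAF⟩
    refine ⟨(derivedSet (A : Set (ℕ → Bool))).ncard, hAX, ⟨?_, ?_⟩, hAF⟩
    · exact (Set.ncard_pos hfin).2 hne
    · omega
  · rintro ⟨m, hAX, ⟨h1, h2⟩, hAF⟩
    exact ⟨hAX, ⟨Set.nonempty_of_ncard_ne_zero (by omega),
      Set.finite_of_ncard_ne_zero (by omega)⟩, hAF⟩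

end St18

theorem statement18 (X : Set (ℕ → Bool)) (hX : IsSigmaCompact X)
    (F : Set (ℕ → Bool)) (hFc : IsCompact F) (hFne : F.Nonempty) (hFX : F ⊆ X)
    (n : ℕ) (hn : 1 ≤ n) :
    IsFsigmaDelta
      {A : NonemptyCompacts (ℕ → Bool) | (A : Set (ℕ → Bool)) ⊆ X ∧ A ∈ AnF (ℕ → Bool) n F} ∧
    IsFsigmaDeltaSigma
      {A : NonemptyCompacts (ℕ → Bool) | (A : Set (ℕ → Bool)) ⊆ X ∧ A ∈ AomF (ℕ → Bool) F} :=
  ⟨St18.part1 X hX F hFc hFX n, St18.part2 X hX F hFc hFX⟩
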